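/- Truncation convergence for β > γ: if x is the unique bounded solution of the infinite system x_i = b_i + ∑_{j=0}^{i-1} (1/α₁) ω_{ij} F_{ij}(x_j) + ∑_{j=i}^{∞} (1/β) ψ_{ij} G_{ij}(x_j), and x_N = (x_{N,i})_{0 ≤ i ≤ N} is the solution of the N-truncated system, then lim_{N→∞} max_{0 ≤ i ≤ N} |x_{N,i} - x_i| = 0. -/

import Mathlib

open Real Finset Filter Topology

/-- The quadrature weights of section 3, equation (3.2). -/
noncomputable def omegaW (α₁ α₂ h : ℝ) (i j : ℕ) : ℝ :=
  Real.exp ((α₁ * j - α₂ * i) * h) * (Real.exp (α₁ * h) - 1)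

noncomputable def psiW (β γ h : ℝ) (i j : ℕ) : ℝ :=
  Real.exp ((-β * j + γ * i) * h) * (1 - Real.exp (-β * h))

set_option maxHeartbeats 1600000

/-- Theorem 3.1: for β > γ the solutions of the truncated systems converge
uniformly to the solution of the infinite system (3.1). -/
theorem stmt_15 {n : ℕ} (α₁ α₂ β γ h : ℝ)
    (hα₁ : α₁ ≠ 0) (hα₂ : 0 ≤ α₂) (hα : α₁ ≤ α₂) (hβ : 0 < β) (hγ : γ < β)
    (hh : 0 < h)
    (b : ℕ → (Fin n → ℝ)) (hb : ∃ M : ℝ, ∀ i, ‖b i‖ ≤ M)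
    (F G : ℕ → ℕ → (Fin n → ℝ) → (Fin n → ℝ))
    (Cf Cg Lf Lg : ℝ)
    (hFb : ∀ i j : ℕ, ∀ x : Fin n → ℝ, ‖F i j x‖ ≤ Cf)
    (hGb : ∀ i j : ℕ, ∀ x : Fin n → ℝ, ‖G i j x‖ ≤ Cg)
    (hFL : ∀ i j : ℕ, ∀ x y : Fin n → ℝ, ‖F i j x - F i j y‖ ≤ Lf * ‖x - y‖)
    (hGL : ∀ i j : ℕ, ∀ x y : Fin n → ℝ, ‖G i j x - G i j y‖ ≤ Lg * ‖x - y‖)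
    (hq : Lf / |α₁| + Lg / β < 1)
    -- x is the unique bounded solution of the infinite system (3.1)
    (x : ℕ → (Fin n → ℝ)) (hxbd : ∃ M : ℝ, ∀ i, ‖x i‖ ≤ M)
    (hx : ∀ i : ℕ, x i = b i +
      (∑ j ∈ Finset.range i, ((1 / α₁) * omegaW α₁ α₂ h i j) • F i j (x j)) +
      ∑' k : ℕ, ((1 / β) * psiW β γ h i (i + k)) • G i (i + k) (x (i + k)))
    -- Y N is the solution of the N-truncated system (3.4)
    (Y : ℕ → ℕ → (Fin n → ℝ))
    (hY : ∀ N : ℕ, ∀ i : ℕ, i ≤ N → Y N i = b i +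
      (∑ j ∈ Finset.range i, ((1 / α₁) * omegaW α₁ α₂ h i j) • F i j (Y N j)) +
      ∑ j ∈ Finset.Icc i N, ((1 / β) * psiW β γ h i j) • G i j (Y N j)) :
    ∀ ε > (0:ℝ), ∃ N₀ : ℕ, ∀ N ≥ N₀, ∀ i ≤ N, ‖Y N i - x i‖ < ε := by
  intro ε hε
  rcases Nat.eq_zero_or_pos n with hn | hn
  · refine ⟨0, fun N _ i _ => ?_⟩
    have h0 : Y N i - x i = 0 := by
      subst hn
      exact funext fun j => j.elim0
    rw [h0, norm_zero]
    exact hε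
  haveI : Nonempty (Fin n) := ⟨⟨0, hn⟩⟩
  have expl1 : ∀ {y : ℝ}, y ≤ 0 → Real.exp y ≤ 1 := by
    intro y hy; simpa using Real.exp_le_exp.mpr hy
  have expl1' : ∀ {y : ℝ}, y < 0 → Real.exp y < 1 := by
    intro y hy; simpa using Real.exp_lt_exp.mpr hy
  have expg1 : ∀ {y : ℝ}, 0 ≤ y → 1 ≤ Real.exp y := by
    intro y hy; simpa using Real.exp_le_exp.mpr hy
  have hα₁' : (0:ℝ) < |α₁| := abs_pos.mpr hα₁
  -- the geometric ratio r
  set r : ℝ := Real.exp (-(β * h)) with hr_def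
  have hr0 : 0 < r := Real.exp_pos _
  have hr1 : r < 1 := expl1' (by nlinarith)
  have h1r : 0 < 1 - r := by linarith
  -- the decay ratio s
  set s : ℝ := Real.exp ((max γ 0 - β) * h) with hs_def
  have hs0 : 0 ≤ s := (Real.exp_pos _).le
  have hs1 : s < 1 := expl1' (by
    have hm : max γ 0 < β := max_lt hγ hβ
    nlinarith)
  -- nonnegativity of the constants
  have hLf0 : 0 ≤ Lf := by
    have h1 := hFL 0 0 (fun _ => 1) 0
    have h2 : ‖((fun _ => 1) - 0 : Fin n → ℝ)‖ = 1 := by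
      simp
    rw [h2, mul_one] at h1
    exact le_trans (norm_nonneg _) h1
  have hLg0 : 0 ≤ Lg := by
    have h1 := hGL 0 0 (fun _ => 1) 0
    have h2 : ‖((fun _ => 1) - 0 : Fin n → ℝ)‖ = 1 := by
      simp
    rw [h2, mul_one] at h1
    exact le_trans (norm_nonneg _) h1
  have hCg0 : 0 ≤ Cg := le_trans (norm_nonneg _) (hGb 0 0 0)
  have hq1 : 0 < 1 - (Lf / |α₁| + Lg / β) := by linarith
  -- basic formulas for the weights
  have hpsi : ∀ i j : ℕ, psiW β γ h i j = Real.exp (γ * i * h) * r ^ j * (1 - r) := by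
    intro i j
    rw [hr_def]
    unfold psiW
    rw [show (-β * (j:ℝ) + γ * (i:ℝ)) * h = γ * (i:ℝ) * h + (j:ℝ) * (-(β*h)) by ring,
      Real.exp_add, Real.exp_nat_mul, neg_mul]
  have hpsid : ∀ i k : ℕ, (1 / β) * psiW β γ h i (i + k)
      = 1/β * (1-r) * Real.exp ((γ - β) * (i:ℝ) * h) * r ^ k := by
    intro i k
    rw [hpsi i (i+k), pow_add]
    have h1 : Real.exp (γ * (i:ℝ) * h) * r ^ i = Real.exp ((γ - β) * (i:ℝ) * h) := by
      rw [hr_def, ← Real.exp_nat_mul, ← Real.exp_add]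
      congr 1; ring
    push_cast
    linear_combination (1/β) * (1-r) * r ^ k * h1
  have hpsinn : ∀ i j : ℕ, 0 ≤ (1 / β) * psiW β γ h i j := by
    intro i j
    rw [hpsi]
    exact mul_nonneg (one_div_nonneg.mpr hβ.le)
      (mul_nonneg (mul_nonneg (Real.exp_pos _).le (pow_nonneg hr0.le _)) h1r.le)
  have hgbe : ∀ i : ℕ, Real.exp ((γ - β) * (i:ℝ) * h) ≤ 1 := by
    intro i
    apply expl1
    have h1 : (0:ℝ) ≤ (β - γ) * (i:ℝ) * h :=
      mul_nonneg (mul_nonneg (by linarith) (Nat.cast_nonneg i)) hh.le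
    nlinarith
  have hpsile : ∀ i k : ℕ, (1 / β) * psiW β γ h i (i + k) ≤ 1/β * (1-r) * r ^ k := by
    intro i k
    rw [hpsid]
    have hc : 0 ≤ 1/β * (1-r) * r ^ k :=
      mul_nonneg (mul_nonneg (one_div_nonneg.mpr hβ.le) h1r.le) (pow_nonneg hr0.le k)
    nlinarith [hgbe i, Real.exp_pos ((γ - β) * (i:ℝ) * h)]
  -- omega weight: absolute value formula
  have homega : ∀ i j : ℕ, |(1 / α₁) * omegaW α₁ α₂ h i j|
      = 1/|α₁| * Real.exp (-(α₂ * (i:ℝ) * h)) * (|Real.exp (α₁*h) - 1| * Real.exp (α₁*h) ^ j) := by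
    intro i j
    unfold omegaW
    rw [abs_mul, abs_mul, abs_of_pos (Real.exp_pos _),
      show ((α₁ * (j:ℝ) - α₂ * (i:ℝ)) * h) = -(α₂ * (i:ℝ) * h) + (j:ℝ) * (α₁ * h) by ring,
      Real.exp_add, Real.exp_nat_mul, abs_div, abs_one]
    ring
  have hgeom : ∀ i : ℕ, |Real.exp (α₁*h) - 1| * ∑ j ∈ Finset.range i, Real.exp (α₁*h) ^ j
      = |Real.exp (α₁*h) ^ i - 1| := by
    intro i
    set a := Real.exp (α₁ * h) with ha_def
    have ha0 : 0 < a := Real.exp_pos _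
    rcases lt_or_gt_of_ne hα₁ with h1 | h1
    · have ha1 : a < 1 := expl1' (by nlinarith)
      have hane : a ≠ 1 := ne_of_lt ha1
      have hai : a ^ i ≤ 1 := pow_le_one₀ ha0.le ha1.le
      have hne : a - 1 ≠ 0 := sub_ne_zero.mpr hane
      rw [geom_sum_eq hane, abs_of_nonpos (by linarith), abs_of_nonpos (by linarith)]
      field_simp
    · have ha1 : 1 < a := by
        rw [ha_def]
        have h2 : Real.exp 0 < Real.exp (α₁ * h) :=
          Real.exp_lt_exp.mpr (by positivity)
        simpa using h2
      have hane : a ≠ 1 := ne_of_gt ha1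
      have hai : 1 ≤ a ^ i := by
        have := pow_le_pow_left₀ zero_le_one ha1.le i
        rwa [one_pow] at this
      have hne : a - 1 ≠ 0 := sub_ne_zero.mpr hane
      rw [geom_sum_eq hane, abs_of_nonneg (by linarith), abs_of_nonneg (by linarith)]
      field_simp
  have homega_sum : ∀ i : ℕ,
      ∑ j ∈ Finset.range i, |(1 / α₁) * omegaW α₁ α₂ h i j| ≤ 1 / |α₁| := by
    intro i
    have heq : ∑ j ∈ Finset.range i, |(1 / α₁) * omegaW α₁ α₂ h i j|
        = 1/|α₁| * Real.exp (-(α₂ * (i:ℝ) * h)) *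
          (|Real.exp (α₁*h) - 1| * ∑ j ∈ Finset.range i, Real.exp (α₁*h) ^ j) := by
      rw [Finset.mul_sum, Finset.mul_sum]
      exact Finset.sum_congr rfl fun j _ => (homega i j).trans (by ring)
    rw [heq, hgeom i]
    have hbd : Real.exp (-(α₂ * (i:ℝ) * h)) * |Real.exp (α₁*h) ^ i - 1| ≤ 1 := by
      rw [← Real.exp_nat_mul]
      rcases lt_or_gt_of_ne hα₁ with h1 | h1
      · have e1 : Real.exp ((i:ℝ) * (α₁*h)) ≤ 1 := by
          apply expl1
          have : (0:ℝ) ≤ (i:ℝ) * (-(α₁*h)) :=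
            mul_nonneg (Nat.cast_nonneg i) (by nlinarith)
          linarith
        have e2 : Real.exp (-(α₂ * (i:ℝ) * h)) ≤ 1 := by
          apply expl1
          have : (0:ℝ) ≤ α₂ * (i:ℝ) * h :=
            mul_nonneg (mul_nonneg hα₂ (Nat.cast_nonneg i)) hh.le
          linarith
        rw [abs_of_nonpos (by linarith)]
        nlinarith [Real.exp_pos ((i:ℝ) * (α₁*h)), Real.exp_pos (-(α₂ * (i:ℝ) * h))]
      · have e1 : 1 ≤ Real.exp ((i:ℝ) * (α₁*h)) :=
          expg1 (mul_nonneg (Nat.cast_nonneg i) (by positivity))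
        rw [abs_of_nonneg (by linarith)]
        have key2 : Real.exp (-(α₂ * (i:ℝ) * h)) * Real.exp ((i:ℝ) * (α₁*h)) ≤ 1 := by
          rw [← Real.exp_add]
          apply expl1
          have : (0:ℝ) ≤ (α₂ - α₁) * (i:ℝ) * h :=
            mul_nonneg (mul_nonneg (by linarith) (Nat.cast_nonneg i)) hh.le
          nlinarith
        nlinarith [Real.exp_pos (-(α₂ * (i:ℝ) * h))]
    nlinarith [hbd, one_div_pos.mpr hα₁',
      abs_nonneg (Real.exp (α₁*h) ^ i - 1), (Real.exp_pos (-(α₂ * (i:ℝ) * h))).le]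
  -- the main estimate for each N
  have main : ∀ N : ℕ, ∀ i ≤ N, ‖Y N i - x i‖
      ≤ (Cg/β * Real.exp (-(β*h)) * s ^ N) / (1 - (Lf / |α₁| + Lg / β)) := by
    intro N
    have hne : (Finset.range (N+1)).Nonempty := ⟨0, by simp⟩
    set E : ℝ := (Finset.range (N+1)).sup' hne (fun j => ‖Y N j - x j‖) with hE_def
    have hE_ge : ∀ i ≤ N, ‖Y N i - x i‖ ≤ E := by
      intro i hi
      exact Finset.le_sup' (fun j => ‖Y N j - x j‖)
        (Finset.mem_range.mpr (Nat.lt_succ_of_le hi))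
    have hE0 : 0 ≤ E := le_trans (norm_nonneg _) (hE_ge 0 (Nat.zero_le N))
    have step : ∀ i ≤ N, ‖Y N i - x i‖
        ≤ (Lf / |α₁| + Lg / β) * E + Cg/β * Real.exp (-(β*h)) * s ^ N := by
      intro i hiN
      have hxi := hx i
      have hYi := hY N i hiN
      set f : ℕ → Fin n → ℝ :=
        fun k => ((1 / β) * psiW β γ h i (i + k)) • G i (i + k) (x (i + k)) with hf_def
      have hnormf : ∀ k, ‖f k‖
          ≤ (1/β * (1-r) * Real.exp ((γ - β) * (i:ℝ) * h) * Cg) * r ^ k := by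
        intro k
        simp only [hf_def]
        rw [norm_smul, Real.norm_eq_abs, abs_of_nonneg (hpsinn i (i+k)), hpsid i k]
        have h2 : ‖G i (i+k) (x (i+k))‖ ≤ Cg := hGb _ _ _
        have hc : 0 ≤ 1/β * (1-r) * Real.exp ((γ - β) * (i:ℝ) * h) * r ^ k :=
          mul_nonneg (mul_nonneg (mul_nonneg (one_div_nonneg.mpr hβ.le) h1r.le)
            (Real.exp_pos _).le) (pow_nonneg hr0.le k)
        nlinarith [norm_nonneg (G i (i+k) (x (i+k)))]
      have hsumf : Summable f :=
        Summable.of_norm_bounded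
          ((summable_geometric_of_lt_one hr0.le hr1).mul_left _) hnormf
      have hIccY : ∑ j ∈ Finset.Icc i N, ((1 / β) * psiW β γ h i j) • G i j (Y N j)
          = ∑ k ∈ Finset.range (N+1-i),
              ((1 / β) * psiW β γ h i (i+k)) • G i (i+k) (Y N (i+k)) := by
        rw [show Finset.Icc i N = Finset.Ico i (N+1) from by rw [Finset.Ico_add_one_right_eq_Icc],
          Finset.sum_Ico_eq_sum_range]
      have key : Y N i - x i =
          (∑ j ∈ Finset.range i, ((1 / α₁) * omegaW α₁ α₂ h i j)
              • (F i j (Y N j) - F i j (x j)))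
          + (∑ k ∈ Finset.range (N+1-i), ((1 / β) * psiW β γ h i (i+k))
              • (G i (i+k) (Y N (i+k)) - G i (i+k) (x (i+k))))
          - ∑' k : ℕ, f (k + (N+1-i)) := by
        rw [hYi, hxi, ← hsumf.sum_add_tsum_nat_add (N+1-i), hIccY]
        simp only [hf_def, smul_sub, Finset.sum_sub_distrib]
        abel
      -- bound the F part
      have hSf : ‖∑ j ∈ Finset.range i, ((1 / α₁) * omegaW α₁ α₂ h i j)
          • (F i j (Y N j) - F i j (x j))‖ ≤ Lf / |α₁| * E := by
        calc ‖∑ j ∈ Finset.range i, ((1 / α₁) * omegaW α₁ α₂ h i j)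
            • (F i j (Y N j) - F i j (x j))‖
            ≤ ∑ j ∈ Finset.range i, ‖((1 / α₁) * omegaW α₁ α₂ h i j)
                • (F i j (Y N j) - F i j (x j))‖ := norm_sum_le _ _
          _ ≤ ∑ j ∈ Finset.range i, |(1 / α₁) * omegaW α₁ α₂ h i j| * (Lf * E) := by
              refine Finset.sum_le_sum fun j hj => ?_
              rw [norm_smul, Real.norm_eq_abs]
              have hj' : j ≤ N := le_trans (Finset.mem_range.mp hj).le hiN
              exact mul_le_mul_of_nonneg_left
                ((hFL i j _ _).trans (mul_le_mul_of_nonneg_left (hE_ge j hj') hLf0))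
                (abs_nonneg _)
          _ = (∑ j ∈ Finset.range i, |(1 / α₁) * omegaW α₁ α₂ h i j|) * (Lf * E) := by
              rw [Finset.sum_mul]
          _ ≤ 1/|α₁| * (Lf * E) :=
              mul_le_mul_of_nonneg_right (homega_sum i) (mul_nonneg hLf0 hE0)
          _ = Lf / |α₁| * E := by ring
      -- bound the G part
      have hgeo_sum : ∑ k ∈ Finset.range (N+1-i), r ^ k ≤ (1-r)⁻¹ := by
        have h1 : ∑ k ∈ Finset.range (N+1-i), r ^ k ≤ ∑' k : ℕ, r ^ k :=
          Summable.sum_le_tsum _ (fun k _ => pow_nonneg hr0.le k)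
            (summable_geometric_of_lt_one hr0.le hr1)
        rwa [tsum_geometric_of_lt_one hr0.le hr1] at h1
      have hSg : ‖∑ k ∈ Finset.range (N+1-i), ((1 / β) * psiW β γ h i (i+k))
          • (G i (i+k) (Y N (i+k)) - G i (i+k) (x (i+k)))‖ ≤ Lg / β * E := by
        calc ‖∑ k ∈ Finset.range (N+1-i), ((1 / β) * psiW β γ h i (i+k))
            • (G i (i+k) (Y N (i+k)) - G i (i+k) (x (i+k)))‖
            ≤ ∑ k ∈ Finset.range (N+1-i), ‖((1 / β) * psiW β γ h i (i+k))
               • (G i (i+k) (Y N (i+k)) - G i (i+k) (x (i+k)))‖ := norm_sum_le _ _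
          _ ≤ ∑ k ∈ Finset.range (N+1-i), (1/β * (1-r) * r ^ k) * (Lg * E) := by
              refine Finset.sum_le_sum fun k hk => ?_
              rw [norm_smul, Real.norm_eq_abs, abs_of_nonneg (hpsinn i (i+k))]
              have hik : i + k ≤ N := by
                have := Finset.mem_range.mp hk; omega
              have hG : ‖G i (i+k) (Y N (i+k)) - G i (i+k) (x (i+k))‖ ≤ Lg * E :=
                (hGL _ _ _ _).trans
                  (mul_le_mul_of_nonneg_left (hE_ge _ hik) hLg0)
              exact mul_le_mul (hpsile i k) hG (norm_nonneg _)
                (mul_nonneg (mul_nonneg (one_div_nonneg.mpr hβ.le) h1r.le)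
                  (pow_nonneg hr0.le k))
          _ = (∑ k ∈ Finset.range (N+1-i), r ^ k) * (1/β * (1-r) * (Lg * E)) := by
              rw [Finset.sum_mul]
              exact Finset.sum_congr rfl fun k _ => by ring
          _ ≤ (1-r)⁻¹ * (1/β * (1-r) * (Lg * E)) :=
              mul_le_mul_of_nonneg_right hgeo_sum
                (mul_nonneg (mul_nonneg (one_div_nonneg.mpr hβ.le) h1r.le)
                  (mul_nonneg hLg0 hE0))
          _ = Lg / β * E := by
              have hrne : (1:ℝ) - r ≠ 0 := ne_of_gt h1r
              field_simp
      -- bound the tail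
      have hsum_shift : Summable (fun k : ℕ =>
          (1/β * (1-r) * Real.exp ((γ - β) * (i:ℝ) * h) * Cg) * r ^ (k + (N+1-i))) := by
        have h1 := (summable_geometric_of_lt_one hr0.le hr1).mul_left
          ((1/β * (1-r) * Real.exp ((γ - β) * (i:ℝ) * h) * Cg) * r ^ (N+1-i))
        exact h1.congr fun k => by rw [pow_add]; ring
      have hsum_normtail : Summable (fun k : ℕ => ‖f (k + (N+1-i))‖) :=
        Summable.of_nonneg_of_le (fun _ => norm_nonneg _)
          (fun k => hnormf (k + (N+1-i))) hsum_shift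
      have htail : ‖∑' k : ℕ, f (k + (N+1-i))‖ ≤ Cg/β * Real.exp (-(β*h)) * s ^ N := by
        have hcast : ((N + 1 - i : ℕ) : ℝ) = (N:ℝ) + 1 - (i:ℝ) := by
          have h' : i ≤ N + 1 := Nat.le_succ_of_le hiN
          rw [Nat.cast_sub h']
          push_cast
          ring
        have hkey : Real.exp ((γ - β) * (i:ℝ) * h) * r ^ (N+1-i)
            ≤ Real.exp (-(β*h)) * s ^ N := by
          rw [hr_def, hs_def, ← Real.exp_nat_mul, ← Real.exp_nat_mul,
            ← Real.exp_add, ← Real.exp_add]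
          apply Real.exp_le_exp.mpr
          rw [hcast]
          have hγi : γ * (i:ℝ) ≤ max γ 0 * (N:ℝ) := by
            have h0γ : (0:ℝ) ≤ max γ 0 := le_max_right _ _
            have hγm : γ ≤ max γ 0 := le_max_left _ _
            have hiN' : (i:ℝ) ≤ (N:ℝ) := Nat.cast_le.mpr hiN
            nlinarith [(Nat.cast_nonneg i : (0:ℝ) ≤ (i:ℝ))]
          nlinarith [mul_le_mul_of_nonneg_right hγi hh.le]
        calc ‖∑' k : ℕ, f (k + (N+1-i))‖
            ≤ ∑' k : ℕ, ‖f (k + (N+1-i))‖ := norm_tsum_le_tsum_norm hsum_normtail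
          _ ≤ ∑' k : ℕ, (1/β * (1-r) * Real.exp ((γ - β) * (i:ℝ) * h) * Cg)
                * r ^ (k + (N+1-i)) :=
              Summable.tsum_le_tsum (fun k => hnormf _) hsum_normtail hsum_shift
          _ = (1/β * (1-r) * Real.exp ((γ - β) * (i:ℝ) * h) * Cg)
                * r ^ (N+1-i) * (1-r)⁻¹ := by
              have hco : ∀ k : ℕ, (1/β * (1-r) * Real.exp ((γ - β) * (i:ℝ) * h) * Cg)
                  * r ^ (k + (N+1-i))
                  = ((1/β * (1-r) * Real.exp ((γ - β) * (i:ℝ) * h) * Cg)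
                      * r ^ (N+1-i)) * r ^ k := fun k => by rw [pow_add]; ring
              rw [tsum_congr hco, tsum_mul_left, tsum_geometric_of_lt_one hr0.le hr1]
          _ = Cg/β * (Real.exp ((γ - β) * (i:ℝ) * h) * r ^ (N+1-i)) := by
              have hrne : (1:ℝ) - r ≠ 0 := ne_of_gt h1r
              field_simp
          _ ≤ Cg/β * (Real.exp (-(β*h)) * s ^ N) :=
              mul_le_mul_of_nonneg_left hkey (div_nonneg hCg0 hβ.le)
          _ = Cg/β * Real.exp (-(β*h)) * s ^ N := by ring
      -- combine
      have tri : ∀ u v w : Fin n → ℝ, ‖u + v - w‖ ≤ ‖u‖ + ‖v‖ + ‖w‖ := fun u v w =>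
        (norm_sub_le _ _).trans (by linarith [norm_add_le u v])
      rw [key]
      refine le_trans (tri _ _ _) ?_
      have := hSf
      have := hSg
      have := htail
      nlinarith [hSf, hSg, htail]
    have hEle : E ≤ (Lf / |α₁| + Lg / β) * E + Cg/β * Real.exp (-(β*h)) * s ^ N :=
      Finset.sup'_le _ _ fun i hi =>
        step i (Nat.lt_succ_iff.mp (Finset.mem_range.mp hi))
    intro i hi
    refine (hE_ge i hi).trans ?_
    rw [le_div_iff₀ hq1]
    nlinarith [hEle]
  -- pass to the limit
  have hC : Tendsto (fun N : ℕ =>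
      (Cg/β * Real.exp (-(β*h)) * s ^ N) / (1 - (Lf / |α₁| + Lg / β)))
      atTop (𝓝 0) := by
    have h1 : Tendsto (fun N : ℕ => s ^ N) atTop (𝓝 0) :=
      tendsto_pow_atTop_nhds_zero_of_lt_one hs0 hs1
    have h2 := h1.const_mul (Cg/β * Real.exp (-(β*h)) / (1 - (Lf / |α₁| + Lg / β)))
    rw [mul_zero] at h2
    exact h2.congr fun N => by ring
  have hev : ∀ᶠ N in atTop,
      (Cg/β * Real.exp (-(β*h)) * s ^ N) / (1 - (Lf / |α₁| + Lg / β)) < ε :=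
    hC.eventually_lt_const hε
  obtain ⟨N₀, hN₀⟩ := Filter.eventually_atTop.mp hev
  exact ⟨N₀, fun N hN i hi => lt_of_le_of_lt (main N i hi) (hN₀ N hN)⟩
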